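/- (Game characterization of the generalized robustness of states, finite-dimensional case) Let F be a nonempty compact convex set of d×d density matrices containing a positive definite density matrix, and let ρ be a d×d density matrix. Then sup { Re(tr(Y·ρ)) / (sup_{σ∈F} Re(tr(Y·σ))) : Y a nonzero d×d positive semidefinite matrix } = 1 + R_F(ρ). (Note that sup_{σ∈F} Re(tr(Y·σ)) > 0 automatically for every nonzero positive semidefinite Y, since F contains a positive definite state, so all quotients are well defined.) -/

import Mathlib

open scoped ENNReal NNReal ComplexOrder

/-- A density matrix: a positive semidefinite complex matrix of trace one. -/
def IsDensity {d : ℕ} (ρ : Matrix (Fin d) (Fin d) ℂ) : Prop :=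
  ρ.PosSemidef ∧ ρ.trace = 1

/-- The generalized robustness of a state `ρ` w.r.t. a free set `F`:
the infimum of those `t ≥ 0` for which there are a density matrix `τ` and `σ ∈ F`
with `ρ + t • τ = (1 + t) • σ`, with `inf ∅ = ∞`. -/
noncomputable def Rgen {d : ℕ} (F : Set (Matrix (Fin d) (Fin d) ℂ))
    (ρ : Matrix (Fin d) (Fin d) ℂ) : ℝ≥0∞ :=
  ⨅ t ∈ {t : ℝ≥0 | ∃ τ, IsDensity τ ∧
      ∃ σ ∈ F, ρ + (t : ℝ) • τ = ((1 : ℝ) + (t : ℝ)) • σ}, (t : ℝ≥0∞)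

namespace RgenAux
open Matrix
variable {d : ℕ}


variable {d : ℕ}

open scoped MatrixOrder in
noncomputable def _root_.Matrix.PosSemidef.sqrt {M : Matrix (Fin d) (Fin d) ℂ} (_hM : M.PosSemidef) :
    Matrix (Fin d) (Fin d) ℂ := CFC.sqrt M

open scoped MatrixOrder in
lemma _root_.Matrix.PosSemidef.sqrt_mul_self {M : Matrix (Fin d) (Fin d) ℂ} (hM : M.PosSemidef) :
    hM.sqrt * hM.sqrt = M := CFC.sqrt_mul_sqrt_self M (Matrix.nonneg_iff_posSemidef.mpr hM)

open scoped MatrixOrder in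
lemma _root_.Matrix.PosSemidef.posSemidef_sqrt {M : Matrix (Fin d) (Fin d) ℂ} (hM : M.PosSemidef) :
    hM.sqrt.PosSemidef := Matrix.nonneg_iff_posSemidef.mp (CFC.sqrt_nonneg M)

lemma herm_qf_star {H : Matrix (Fin d) (Fin d) ℂ} (hH : H.IsHermitian) (x : Fin d → ℂ) :
    star (star x ⬝ᵥ H *ᵥ x) = star x ⬝ᵥ H *ᵥ x := by
  have h1 : star x ⬝ᵥ (H *ᵥ x) = star (star (H *ᵥ x) ⬝ᵥ x) := star_dotProduct _ _
  conv_lhs => rw [h1, star_star]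
  rw [star_mulVec, ← dotProduct_mulVec, hH.eq]

lemma herm_qf_im {H : Matrix (Fin d) (Fin d) ℂ} (hH : H.IsHermitian) (x : Fin d → ℂ) :
    (star x ⬝ᵥ H *ᵥ x).im = 0 := by
  have h := congrArg Complex.im (herm_qf_star hH x)
  simp only [Complex.star_def, Complex.conj_im] at h
  linarith

lemma psd_of_herm_re {H : Matrix (Fin d) (Fin d) ℂ} (hH : H.IsHermitian)
    (h : ∀ x : Fin d → ℂ, 0 ≤ (star x ⬝ᵥ H *ᵥ x).re) : H.PosSemidef := by
  refine Matrix.PosSemidef.of_dotProduct_mulVec_nonneg hH fun x => ?_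
  rw [Complex.le_def]
  exact ⟨by simpa using h x, by simpa using (herm_qf_im hH x).symm⟩

lemma qf_eq_trace (H : Matrix (Fin d) (Fin d) ℂ) (x : Fin d → ℂ) :
    (H * vecMulVec x (star x)).trace = star x ⬝ᵥ H *ᵥ x := by
  simp only [Matrix.trace, Matrix.diag, Matrix.mul_apply, vecMulVec_apply, dotProduct, mulVec,
    dotProduct, Pi.star_apply]
  congr 1; ext i
  rw [Finset.mul_sum]
  congr 1; ext j
  ring

lemma outer_posSemidef (x : Fin d → ℂ) : (vecMulVec x (star x)).PosSemidef := by
  have h : vecMulVec x (star x) = (Matrix.replicateCol (Fin 1) x) * (Matrix.replicateCol (Fin 1) x)ᴴ := by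
    ext i j; simp [vecMulVec_apply, Matrix.mul_apply, Matrix.replicateCol, conjTranspose_apply]
  rw [h]
  exact posSemidef_self_mul_conjTranspose _


variable {d : ℕ}

lemma psd_diag_re_nonneg {M : Matrix (Fin d) (Fin d) ℂ} (hM : M.PosSemidef) (i : Fin d) :
    0 ≤ (M i i).re := by
  have h := hM.dotProduct_mulVec_nonneg (Pi.single i 1)
  have hv : star (Pi.single i (1:ℂ)) ⬝ᵥ M *ᵥ Pi.single i 1 = M i i := by
    simp [dotProduct, mulVec, Pi.single_apply, Finset.sum_ite_eq, Finset.sum_ite_eq']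
  rw [hv] at h
  exact (Complex.le_def.mp h).1

lemma psd_trace_re_nonneg {M : Matrix (Fin d) (Fin d) ℂ} (hM : M.PosSemidef) :
    0 ≤ (M.trace).re := by
  have : (M.trace).re = ∑ i, (M i i).re := by
    simp [Matrix.trace, Matrix.diag, Complex.re_sum]
  rw [this]
  exact Finset.sum_nonneg fun i _ => psd_diag_re_nonneg hM i

/-- `tr(Y τ)` has nonnegative real part for `Y, τ` PSD. -/
lemma trace_mul_psd_re_nonneg {Y τ : Matrix (Fin d) (Fin d) ℂ}
    (hY : Y.PosSemidef) (hτ : τ.PosSemidef) : 0 ≤ ((Y * τ).trace).re := by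
  have hS := hY.sqrt_mul_self
  have hherm : hY.sqrt.IsHermitian := hY.posSemidef_sqrt.isHermitian
  have h1 : (Y * τ).trace = (hY.sqrt * τ * hY.sqrtᴴ).trace := by
    calc (Y * τ).trace = (hY.sqrt * (hY.sqrt * τ)).trace := by rw [← Matrix.mul_assoc, hS]
      _ = ((hY.sqrt * τ) * hY.sqrt).trace := Matrix.trace_mul_comm _ _
      _ = (hY.sqrt * τ * hY.sqrtᴴ).trace := by rw [hherm.eq]
  rw [h1]
  exact psd_trace_re_nonneg (hτ.mul_mul_conjTranspose_same _)

/-- `tr(Y σ)` has positive real part for `Y` PSD nonzero and `σ` positive definite. -/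
lemma trace_mul_pd_re_pos {Y σ : Matrix (Fin d) (Fin d) ℂ}
    (hY : Y.PosSemidef) (hY0 : Y ≠ 0) (hσ : σ.PosDef) : 0 < ((Y * σ).trace).re := by
  have hS := hY.sqrt_mul_self
  have hherm : hY.sqrt.IsHermitian := hY.posSemidef_sqrt.isHermitian
  set S := hY.sqrt with hSdef
  have h1 : (Y * σ).trace = (S * σ * Sᴴ).trace := by
    calc (Y * σ).trace = (S * (S * σ)).trace := by rw [← Matrix.mul_assoc, hS]
      _ = ((S * σ) * S).trace := Matrix.trace_mul_comm _ _
      _ = (S * σ * Sᴴ).trace := by rw [hherm.eq]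
  -- S ≠ 0
  have hS0 : S ≠ 0 := by
    intro h
    apply hY0
    rw [← hS, h, Matrix.mul_zero]
  obtain ⟨i, j, hij⟩ : ∃ i j, S i j ≠ 0 := by
    by_contra h
    push_neg at h
    exact hS0 (by ext i j; simpa using h i j)
  -- diagonal entries of S σ Sᴴ
  have hdiag : ∀ k, (S * σ * Sᴴ) k k = star (Sᴴ *ᵥ Pi.single k 1) ⬝ᵥ σ *ᵥ (Sᴴ *ᵥ Pi.single k 1) := by
    intro k
    have hv : ∀ (M : Matrix (Fin d) (Fin d) ℂ),
        star (Pi.single k (1:ℂ)) ⬝ᵥ M *ᵥ Pi.single k 1 = M k k := by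
      intro M
      simp [dotProduct, mulVec, Pi.single_apply, Finset.sum_ite_eq, Finset.sum_ite_eq']
    calc (S * σ * Sᴴ) k k
        = star (Pi.single k (1:ℂ)) ⬝ᵥ (S * σ * Sᴴ) *ᵥ Pi.single k 1 := (hv _).symm
      _ = star (Pi.single k (1:ℂ)) ⬝ᵥ S *ᵥ (σ *ᵥ (Sᴴ *ᵥ Pi.single k 1)) := by
          rw [Matrix.mulVec_mulVec, Matrix.mulVec_mulVec]
      _ = (star (Pi.single k (1:ℂ)) ᵥ* S) ⬝ᵥ (σ *ᵥ (Sᴴ *ᵥ Pi.single k 1)) :=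
          dotProduct_mulVec _ _ _
      _ = star (Sᴴ *ᵥ Pi.single k 1) ⬝ᵥ σ *ᵥ (Sᴴ *ᵥ Pi.single k 1) := by
          rw [star_mulVec, conjTranspose_conjTranspose]
  have hnn : ∀ k, 0 ≤ ((S * σ * Sᴴ) k k).re :=
    psd_diag_re_nonneg (hσ.posSemidef.mul_mul_conjTranspose_same _)
  have hipos : 0 < ((S * σ * Sᴴ) i i).re := by
    rw [hdiag i]
    apply hσ.re_dotProduct_pos
    intro h
    apply hij
    have := congrFun h j
    simp only [mulVec, dotProduct, Pi.single_apply, conjTranspose_apply] at this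
    simp only [Pi.zero_apply] at this
    rw [Finset.sum_eq_single i] at this
    · simp at this
      exact (star_eq_zero.mp (by simpa using this))
    · intro b _ hb; simp [hb]
    · simp
  have htr : ((S * σ * Sᴴ).trace).re = ∑ k, ((S * σ * Sᴴ) k k).re := by
    simp [Matrix.trace, Matrix.diag, Complex.re_sum]
  rw [h1, htr]
  exact Finset.sum_pos' (fun k _ => hnn k) ⟨i, Finset.mem_univ i, hipos⟩

/-- a PSD matrix with zero trace is zero. -/
lemma psd_trace_zero {M : Matrix (Fin d) (Fin d) ℂ} (hM : M.PosSemidef)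
    (h : M.trace = 0) : M = 0 := by
  have hS := hM.sqrt_mul_self
  have hherm : hM.sqrt.IsHermitian := hM.posSemidef_sqrt.isHermitian
  set S := hM.sqrt with hSdef
  have h1 : M.trace = (Sᴴ * S).trace := by rw [hherm.eq, hS]
  have h2 : ((Sᴴ * S).trace) = ∑ i, ∑ j, star (S j i) * S j i := by
    simp only [Matrix.trace, Matrix.diag, Matrix.mul_apply, conjTranspose_apply]
  have h3 : ∑ i, ∑ j, Complex.normSq (S j i) = 0 := by
    have := h1 ▸ h
    rw [h2] at this
    have := congrArg Complex.re this
    simpa [Complex.re_sum, Complex.star_def, Complex.mul_re, Complex.normSq] using this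
  have h4 : ∀ i j, S j i = 0 := by
    intro i j
    have hnn : ∀ p ∈ Finset.univ (α := Fin d), 0 ≤ ∑ q, Complex.normSq (S q p) :=
      fun p _ => Finset.sum_nonneg fun q _ => Complex.normSq_nonneg _
    have := (Finset.sum_eq_zero_iff_of_nonneg hnn).mp h3 i (Finset.mem_univ i)
    have := (Finset.sum_eq_zero_iff_of_nonneg
      (fun q _ => Complex.normSq_nonneg (S q i))).mp this j (Finset.mem_univ j)
    exact Complex.normSq_eq_zero.mp this
  have hS0 : S = 0 := by ext j i; simpa using h4 i j
  rw [← hS, hS0, Matrix.mul_zero]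


variable {d : ℕ}

/-- Represent an ℝ-linear functional on complex matrices as `X ↦ re tr (Y X)`. -/
lemma exists_repr (f : Matrix (Fin d) (Fin d) ℂ →ₗ[ℝ] ℝ) :
    ∃ Y : Matrix (Fin d) (Fin d) ℂ, ∀ X, ((Y * X).trace).re = f X := by
  refine ⟨Matrix.of fun i j =>
    (⟨f (Matrix.single j i 1), - f (Complex.I • Matrix.single j i 1)⟩ : ℂ), fun X => ?_⟩
  set Y : Matrix (Fin d) (Fin d) ℂ := Matrix.of fun i j =>
    (⟨f (Matrix.single j i 1), - f (Complex.I • Matrix.single j i 1)⟩ : ℂ) with hY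
  have key : ∀ p q : Fin d, ((X p q).re : ℝ) • Matrix.single p q (1:ℂ)
      + ((X p q).im : ℝ) • (Complex.I • Matrix.single p q (1:ℂ))
      = Matrix.single p q (X p q) := by
    intro p q
    rw [← algebraMap_smul ℂ ((X p q).re), ← algebraMap_smul ℂ ((X p q).im), smul_smul,
      ← add_smul, smul_single, smul_eq_mul, mul_one]
    simp only [Complex.coe_algebraMap, Complex.re_add_im]
  have hdecomp : X = ∑ p, ∑ q, (((X p q).re : ℝ) • Matrix.single p q (1:ℂ)
      + ((X p q).im : ℝ) • (Complex.I • Matrix.single p q (1:ℂ))) := by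
    conv_lhs => rw [matrix_eq_sum_single X]
    exact Finset.sum_congr rfl fun p _ => Finset.sum_congr rfl fun q _ => (key p q).symm
  have hf : f X = ∑ p, ∑ q, ((X p q).re * f (Matrix.single p q 1)
      + (X p q).im * f (Complex.I • Matrix.single p q 1)) := by
    conv_lhs => rw [hdecomp]
    rw [map_sum]
    refine Finset.sum_congr rfl fun p _ => ?_
    rw [map_sum]
    refine Finset.sum_congr rfl fun q _ => ?_
    rw [map_add, f.map_smul, f.map_smul, smul_eq_mul, smul_eq_mul]
  have htr : ((Y * X).trace).re = ∑ i, ∑ j, (Y i j * X j i).re := by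
    simp only [Matrix.trace, Matrix.diag, Matrix.mul_apply, Complex.re_sum]
  rw [htr, hf, Finset.sum_comm]
  refine Finset.sum_congr rfl fun p _ => Finset.sum_congr rfl fun q _ => ?_
  simp only [hY, Matrix.of_apply, Complex.mul_re]
  ring

variable {d : ℕ}

lemma isClosed_psd : IsClosed {P : Matrix (Fin d) (Fin d) ℂ | P.PosSemidef} := by
  have h1 : {P : Matrix (Fin d) (Fin d) ℂ | P.PosSemidef}
      = {P | P.IsHermitian} ∩ ⋂ x : Fin d → ℂ, {P | 0 ≤ star x ⬝ᵥ P *ᵥ x} := by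
    ext P
    simp only [Set.mem_setOf_eq, Set.mem_inter_iff, Set.mem_iInter]
    exact ⟨fun h => ⟨h.1, h.dotProduct_mulVec_nonneg⟩, fun h => Matrix.PosSemidef.of_dotProduct_mulVec_nonneg h.1 h.2⟩
  rw [h1]
  have hcont : ∀ (g : Matrix (Fin d) (Fin d) ℂ → ℂ) , (∀ i j : Fin d, ∃ c : ℂ →L[ℝ] ℂ, True) → True := fun _ _ => trivial
  refine IsClosed.inter ?_ (isClosed_iInter fun x => ?_)
  · have : {P : Matrix (Fin d) (Fin d) ℂ | P.IsHermitian}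
        = ⋂ i, ⋂ j, {P : Matrix (Fin d) (Fin d) ℂ | star (P j i) = P i j} := by
      ext P
      simp only [Set.mem_setOf_eq, Set.mem_iInter, Matrix.IsHermitian, ← Matrix.ext_iff,
        conjTranspose_apply]
    rw [this]
    refine isClosed_iInter fun i => isClosed_iInter fun j => ?_
    have hc1 : Continuous fun P : Matrix (Fin d) (Fin d) ℂ => star (P j i) :=
      continuous_star.comp ((continuous_apply i).comp (continuous_apply j))
    have hc2 : Continuous fun P : Matrix (Fin d) (Fin d) ℂ => P i j :=
      (continuous_apply j).comp (continuous_apply i)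
    exact isClosed_eq hc1 hc2
  · have hc : Continuous fun P : Matrix (Fin d) (Fin d) ℂ => star x ⬝ᵥ P *ᵥ x := by
      unfold dotProduct mulVec dotProduct
      refine continuous_finset_sum _ fun i _ => ?_
      refine Continuous.mul continuous_const ?_
      refine continuous_finset_sum _ fun j _ => ?_
      exact (continuous_id.matrix_elem i j).mul continuous_const
    have hclosed : IsClosed {z : ℂ | 0 ≤ z} := by
      have : {z : ℂ | 0 ≤ z} = Complex.re ⁻¹' (Set.Ici 0) ∩ Complex.im ⁻¹' {0} := by
        ext z
        simp [Complex.le_def, eq_comm]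
      rw [this]
      exact (isClosed_Ici.preimage Complex.continuous_re).inter
        (isClosed_singleton.preimage Complex.continuous_im)
    exact hclosed.preimage hc

lemma convex_psd : Convex ℝ {P : Matrix (Fin d) (Fin d) ℂ | P.PosSemidef} := by
  intro A hA B hB a b ha hb _
  refine psd_of_herm_re ?_ fun x => ?_
  · have hAh := hA.1
    have hBh := hB.1
    unfold Matrix.IsHermitian at *
    rw [conjTranspose_add, conjTranspose_smul_non_comm, conjTranspose_smul_non_comm, hAh, hBh] <;>
      simp [Complex.star_def]
  · have hx : star x ⬝ᵥ (a • A + b • B) *ᵥ x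
        = a • (star x ⬝ᵥ A *ᵥ x) + b • (star x ⬝ᵥ B *ᵥ x) := by
      rw [Matrix.add_mulVec, dotProduct_add, Matrix.smul_mulVec, Matrix.smul_mulVec,
        dotProduct_smul, dotProduct_smul]
    rw [hx]
    simp only [Complex.add_re, Complex.real_smul, Complex.mul_re, Complex.ofReal_re,
      Complex.ofReal_im]
    have h1 := (Complex.le_def.mp (hA.dotProduct_mulVec_nonneg x)).1
    have h2 := (Complex.le_def.mp (hB.dotProduct_mulVec_nonneg x)).1
    have h3 := (Complex.le_def.mp (hA.dotProduct_mulVec_nonneg x)).2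
    have h4 := (Complex.le_def.mp (hB.dotProduct_mulVec_nonneg x)).2
    simp only [Complex.zero_re, Complex.zero_im] at h1 h2 h3 h4
    rw [← h3, ← h4]
    nlinarith


variable {d : ℕ}

/-- the self dot product, real part, as sum of normSq -/
lemma self_dot_re (x : Fin d → ℂ) : (star x ⬝ᵥ x).re = ∑ i, Complex.normSq (x i) := by
  simp only [dotProduct, Pi.star_apply, Complex.re_sum]
  refine Finset.sum_congr rfl fun i _ => ?_
  simp [Complex.star_def, Complex.normSq, Complex.mul_re]

/-- Lemma A: for PSD M, the quadratic form is bounded by trace times the norm. -/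
lemma qf_le_trace {M : Matrix (Fin d) (Fin d) ℂ} (hM : M.PosSemidef) (x : Fin d → ℂ) :
    (star x ⬝ᵥ M *ᵥ x).re ≤ (M.trace).re * (star x ⬝ᵥ x).re := by
  have hS := hM.sqrt_mul_self
  have hherm : hM.sqrt.IsHermitian := hM.posSemidef_sqrt.isHermitian
  set B := hM.sqrt with hBdef
  have h1 : star x ⬝ᵥ M *ᵥ x = star (B *ᵥ x) ⬝ᵥ (B *ᵥ x) := by
    rw [star_mulVec, ← Matrix.dotProduct_mulVec, Matrix.mulVec_mulVec, hherm.eq, hS]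
  have h2 : (M.trace).re = ∑ i, ∑ j, Complex.normSq (B i j) := by
    have h : M.trace = (Bᴴ * B).trace := by rw [hherm.eq, hS]
    rw [h]
    simp only [Matrix.trace, Matrix.diag, Matrix.mul_apply, conjTranspose_apply, Complex.re_sum]
    rw [Finset.sum_comm]
    refine Finset.sum_congr rfl fun i _ => Finset.sum_congr rfl fun j _ => ?_
    simp [Complex.star_def, Complex.normSq, Complex.mul_re]
  rw [h1, self_dot_re, self_dot_re, h2, Finset.sum_mul]
  refine Finset.sum_le_sum fun i _ => ?_
  have habs : ‖(B *ᵥ x) i‖ ≤ ∑ j, ‖B i j‖ * ‖x j‖ := by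
    simp only [mulVec, dotProduct]
    exact (norm_sum_le _ _).trans_eq (by simp [norm_mul])
  have hcs := Finset.sum_mul_sq_le_sq_mul_sq Finset.univ
    (fun j => ‖B i j‖) (fun j => ‖x j‖)
  have h0 : (0:ℝ) ≤ ‖(B *ᵥ x) i‖ := norm_nonneg _
  calc Complex.normSq ((B *ᵥ x) i) = (‖(B *ᵥ x) i‖)^2 := (Complex.sq_norm _).symm
    _ ≤ (∑ j, ‖B i j‖ * ‖x j‖)^2 := by
        exact pow_le_pow_left₀ h0 habs 2
    _ ≤ (∑ j, (‖B i j‖)^2) * ∑ j, (‖x j‖)^2 := hcs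
    _ = (∑ j, Complex.normSq (B i j)) * ∑ j, Complex.normSq (x j) := by
        simp [Complex.sq_norm]

/-- smul scaling of quadratic forms -/
lemma qf_smul (M : Matrix (Fin d) (Fin d) ℂ) (x : Fin d → ℂ) (r : ℝ) :
    (star ((r:ℂ) • x) ⬝ᵥ M *ᵥ ((r:ℂ) • x)).re = r^2 * (star x ⬝ᵥ M *ᵥ x).re := by
  rw [star_smul, Matrix.mulVec_smul, smul_dotProduct, dotProduct_smul]
  simp only [smul_eq_mul, Complex.star_def, Complex.conj_ofReal]
  rw [← mul_assoc, ← Complex.ofReal_mul, Complex.re_ofReal_mul]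
  ring

lemma self_dot_smul (x : Fin d → ℂ) (r : ℝ) :
    (star ((r:ℂ) • x) ⬝ᵥ ((r:ℂ) • x)).re = r^2 * (star x ⬝ᵥ x).re := by
  have h := qf_smul (1 : Matrix (Fin d) (Fin d) ℂ) x r
  rwa [Matrix.one_mulVec, Matrix.one_mulVec] at h

/-- Lemma B: positive definite matrices dominate a multiple of the identity form. -/
lemma pd_lower (hd : 0 < d) {σ : Matrix (Fin d) (Fin d) ℂ} (hσ : σ.PosDef) :
    ∃ c : ℝ, 0 < c ∧ ∀ x, c * (star x ⬝ᵥ x).re ≤ (star x ⬝ᵥ σ *ᵥ x).re := by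
  classical
  let f : (Fin d → ℂ) → ℝ := fun x => (star x ⬝ᵥ σ *ᵥ x).re
  have hfx : ∀ w, f w = (star w ⬝ᵥ σ *ᵥ w).re := fun w => rfl
  have hfc : Continuous f := by
    refine Complex.continuous_re.comp ?_
    unfold dotProduct mulVec dotProduct
    refine continuous_finset_sum _ fun i _ => ?_
    refine Continuous.mul (continuous_star.comp (continuous_apply i)) ?_
    exact continuous_finset_sum _ fun j _ => continuous_const.mul (continuous_apply j)
  let K : Set (Fin d → ℂ) := {x | (star x ⬝ᵥ x).re = 1}
  have hKmem : ∀ x, x ∈ K ↔ (star x ⬝ᵥ x).re = 1 := fun x => Iff.rfl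
  have hgc : Continuous fun x : Fin d → ℂ => (star x ⬝ᵥ x).re := by
    have : (fun x : Fin d → ℂ => (star x ⬝ᵥ x).re) = fun x => ∑ i, Complex.normSq (x i) := by
      funext x; exact self_dot_re x
    rw [this]
    exact continuous_finset_sum _ fun i _ =>
      Complex.continuous_normSq.comp (continuous_apply i)
  have hKclosed : IsClosed K := isClosed_eq hgc continuous_const
  have hKbdd : Bornology.IsBounded K := by
    refine (Metric.isBounded_iff_subset_closedBall 0).mpr ⟨1, fun x hx => ?_⟩
    simp only [Metric.mem_closedBall, dist_zero_right]
    rw [pi_norm_le_iff_of_nonneg (by norm_num)]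
    intro i
    have hsum : ∑ j, Complex.normSq (x j) = 1 := by
      have := (hKmem x).mp hx
      rwa [self_dot_re] at this
    have h1 : Complex.normSq (x i) ≤ 1 := by
      calc Complex.normSq (x i) ≤ ∑ j, Complex.normSq (x j) :=
            Finset.single_le_sum (fun j _ => Complex.normSq_nonneg _) (Finset.mem_univ i)
        _ = 1 := hsum
    have h2 : ‖x i‖^2 ≤ 1 := by rwa [← Complex.sq_norm] at h1
    nlinarith [norm_nonneg (x i)]
  have hKcomp : IsCompact K := Metric.isCompact_of_isClosed_isBounded hKclosed hKbdd
  have hKne : K.Nonempty := by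
    refine ⟨Pi.single ⟨0, hd⟩ 1, ?_⟩
    rw [hKmem, self_dot_re]
    simp [Pi.single_apply, apply_ite Complex.normSq]
  obtain ⟨z, hzK, hzmin⟩ := hKcomp.exists_isMinOn hKne hfc.continuousOn
  have hz0 : z ≠ 0 := by
    intro h
    rw [h, hKmem, self_dot_re] at hzK
    simp at hzK
  have hc : 0 < f z := hσ.re_dotProduct_pos hz0
  refine ⟨f z, hc, fun x => ?_⟩
  rcases eq_or_ne x 0 with rfl | hx0
  · simp [self_dot_re]
  · have hgx : 0 < (star x ⬝ᵥ x).re := by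
      rw [self_dot_re]
      obtain ⟨i, hi⟩ := Function.ne_iff.mp hx0
      exact Finset.sum_pos' (fun j _ => Complex.normSq_nonneg _)
        ⟨i, Finset.mem_univ i, Complex.normSq_pos.mpr hi⟩
    set r : ℝ := Real.sqrt ((star x ⬝ᵥ x).re) with hr
    have hrpos : 0 < r := Real.sqrt_pos.mpr hgx
    have hr2 : r^2 = (star x ⬝ᵥ x).re := Real.sq_sqrt hgx.le
    have hyK : ((r⁻¹ : ℝ) : ℂ) • x ∈ K := by
      rw [hKmem, self_dot_smul, ← hr2]
      field_simp
    have hmin := hzmin hyK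
    have hfy : f (((r⁻¹ : ℝ) : ℂ) • x) = r⁻¹^2 * f x := by
      rw [hfx, hfx, qf_smul]
    rw [Set.mem_setOf_eq, hfy] at hmin
    have hrne : r ≠ 0 := hrpos.ne'
    have h2 : f z * r^2 ≤ f x := by
      calc f z * r^2 ≤ (r⁻¹^2 * f x) * r^2 := by nlinarith [sq_nonneg r]
        _ = f x := by field_simp
    rw [← hr2]
    calc f z * r^2 ≤ f x := h2
      _ = (star x ⬝ᵥ σ *ᵥ x).re := hfx x


variable {d : ℕ}


lemma dim_pos {ρ : Matrix (Fin d) (Fin d) ℂ} (hρ : IsDensity ρ) : 0 < d := by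
  by_contra h
  push_neg at h
  have hd0 : d = 0 := Nat.le_zero.mp h
  subst hd0
  have := hρ.2
  simp [Matrix.trace] at this

lemma psd_smul {M : Matrix (Fin d) (Fin d) ℂ} (hM : M.PosSemidef) {c : ℝ} (hc : 0 ≤ c) :
    (c • M).PosSemidef := by
  refine psd_of_herm_re ?_ fun x => ?_
  · unfold Matrix.IsHermitian
    rw [Matrix.conjTranspose_smul, star_trivial, hM.1.eq]
  · rw [Matrix.smul_mulVec, dotProduct_smul]
    have : ((c • (star x ⬝ᵥ M *ᵥ x) : ℂ)).re = c * (star x ⬝ᵥ M *ᵥ x).re := by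
      simp [Complex.smul_re]
    rw [this]
    exact mul_nonneg hc (hM.re_dotProduct_nonneg x)

lemma herm_comb {ρ σ : Matrix (Fin d) (Fin d) ℂ} (hρ : ρ.IsHermitian) (hσ : σ.IsHermitian)
    (c : ℝ) : (c • σ - ρ).IsHermitian := by
  unfold Matrix.IsHermitian
  rw [Matrix.conjTranspose_sub, Matrix.conjTranspose_smul, star_trivial, hρ.eq, hσ.eq]

lemma trace_comb {ρ σ : Matrix (Fin d) (Fin d) ℂ} (hρ : ρ.trace = 1) (hσ : σ.trace = 1)
    (c : ℝ) : (c • σ - ρ).trace = ((c - 1 : ℝ) : ℂ) := by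
  rw [Matrix.trace_sub, Matrix.trace_smul, hρ, hσ]
  simp [Complex.real_smul]

/-- If `(1+t)σ - ρ` is PSD for some `σ ∈ F`, then `t` is feasible. -/
lemma mem_S {F : Set (Matrix (Fin d) (Fin d) ℂ)} {ρ : Matrix (Fin d) (Fin d) ℂ}
    (hρ : IsDensity ρ) {σ : Matrix (Fin d) (Fin d) ℂ} (hσF : σ ∈ F) (hσ : IsDensity σ)
    (t : ℝ≥0) (hpsd : (((1:ℝ)+(t:ℝ)) • σ - ρ).PosSemidef) :
    t ∈ {t : ℝ≥0 | ∃ τ, IsDensity τ ∧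
      ∃ σ ∈ F, ρ + (t : ℝ) • τ = ((1 : ℝ) + (t : ℝ)) • σ} := by
  set D := ((1:ℝ)+(t:ℝ)) • σ - ρ with hD
  have htr : D.trace = ((t:ℝ) : ℂ) := by
    rw [hD, trace_comb hρ.2 hσ.2]
    norm_num
  rcases eq_or_ne t 0 with rfl | ht0
  · have hD0 : D = 0 := psd_trace_zero hpsd (by rw [htr]; norm_num)
    have hρσ : ρ = σ := by
      have := hD0
      rw [hD] at this
      have h2 : ((1:ℝ)+((0:ℝ≥0):ℝ)) • σ = ρ := by
        rw [sub_eq_zero] at this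
        exact this
      rw [← h2]
      norm_num
    exact ⟨σ, hσ, σ, hσF, by rw [hρσ]; norm_num⟩
  · have htpos : (0:ℝ) < (t:ℝ) := by
      exact_mod_cast pos_iff_ne_zero.mpr ht0
    refine ⟨((t:ℝ)⁻¹) • D, ⟨psd_smul hpsd (by positivity), ?_⟩, σ, hσF, ?_⟩
    · rw [Matrix.trace_smul, htr]
      rw [Complex.real_smul]
      rw [← Complex.ofReal_mul]
      norm_cast
      field_simp
    · rw [smul_smul]
      have : (t:ℝ) * (t:ℝ)⁻¹ = 1 := by
        field_simp
      rw [this, one_smul, hD]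
      abel

variable {d : ℕ}








attribute [local instance] Matrix.normedAddCommGroup Matrix.normedSpace

/-- Separation: if no `(1+t)σ - ρ` is PSD, there is a PSD witness `H`. -/
lemma exists_witness {F : Set (Matrix (Fin d) (Fin d) ℂ)} (hne : F.Nonempty)
    (hcomp : IsCompact F) (hconv : Convex ℝ F)
    {ρ : Matrix (Fin d) (Fin d) ℂ} (hρh : ρ.IsHermitian)
    (hFh : ∀ σ ∈ F, σ.IsHermitian) (c : ℝ)
    (hinf : ∀ σ ∈ F, ¬ (c • σ - ρ).PosSemidef) :
    ∃ H : Matrix (Fin d) (Fin d) ℂ, H.PosSemidef ∧ H ≠ 0 ∧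
      ∀ σ ∈ F, c * ((H * σ).trace).re < ((H * ρ).trace).re := by
  classical
  set s : Set (Matrix (Fin d) (Fin d) ℂ) := (fun σ => c • σ - ρ) '' F with hs
  have hcont : Continuous fun σ : Matrix (Fin d) (Fin d) ℂ => c • σ - ρ :=
    (continuous_id.const_smul c).sub continuous_const
  have hscomp : IsCompact s := hcomp.image hcont
  have hsconv : Convex ℝ s := by
    rintro _ ⟨σ1, h1, rfl⟩ _ ⟨σ2, h2, rfl⟩ a b ha hb hab
    refine ⟨a • σ1 + b • σ2, hconv h1 h2 ha hb hab, ?_⟩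
    have : a • (c • σ1 - ρ) + b • (c • σ2 - ρ) = c • (a • σ1 + b • σ2) - (a + b) • ρ := by
      module
    rw [this, hab, one_smul]
  have hdisj : Disjoint s {P : Matrix (Fin d) (Fin d) ℂ | P.PosSemidef} := by
    rw [Set.disjoint_left]
    rintro _ ⟨σ1, h1, rfl⟩ hP
    exact hinf σ1 h1 hP
  haveI : LocallyConvexSpace ℝ (Matrix (Fin d) (Fin d) ℂ) := NormedSpace.toLocallyConvexSpace
  obtain ⟨f, u, v, hfs, huv, hfc⟩ :=
    geometric_hahn_banach_compact_closed hsconv hscomp convex_psd isClosed_psd hdisj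
  have hv0 : v < 0 := by
    have := hfc 0 Matrix.PosSemidef.zero
    simpa using this
  have hfnn : ∀ P : Matrix (Fin d) (Fin d) ℂ, P.PosSemidef → 0 ≤ f P := by
    intro P hP
    by_contra h
    push_neg at h
    have hcpos : 0 < v / f P := div_pos_of_neg_of_neg hv0 h
    have hmem : ((v / f P) • P).PosSemidef := psd_smul hP hcpos.le
    have := hfc _ hmem
    rw [f.map_smul, smul_eq_mul, div_mul_cancel₀ _ h.ne] at this
    exact lt_irrefl v this
  obtain ⟨Y, hY⟩ := exists_repr (f : Matrix (Fin d) (Fin d) ℂ →ₗ[ℝ] ℝ)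
  set H : Matrix (Fin d) (Fin d) ℂ := ((2:ℝ)⁻¹) • (Y + Yᴴ) with hH
  have hHherm : H.IsHermitian := by
    unfold Matrix.IsHermitian
    rw [hH, Matrix.conjTranspose_smul, star_trivial, Matrix.conjTranspose_add,
      conjTranspose_conjTranspose, add_comm]
  have key : ∀ X : Matrix (Fin d) (Fin d) ℂ, X.IsHermitian → ((H * X).trace).re = f X := by
    intro X hX
    have h1 : (Yᴴ * X).trace = star ((Y * X).trace) := by
      have h2 : Yᴴ * X = (Xᴴ * Y)ᴴ := by
        rw [Matrix.conjTranspose_mul, conjTranspose_conjTranspose]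
      rw [h2, Matrix.trace_conjTranspose, hX.eq, Matrix.trace_mul_comm]
    have h3 : (H * X).trace = ((2:ℝ)⁻¹) • ((Y * X).trace + star ((Y * X).trace)) := by
      rw [hH, Matrix.smul_mul, Matrix.trace_smul, Matrix.add_mul, Matrix.trace_add, h1]
    rw [h3]
    rw [Complex.smul_re]
    simp only [Complex.add_re, Complex.star_def, Complex.conj_re]
    rw [hY]
    rw [smul_eq_mul]
    ring_nf
    rfl
  have hHpsd : H.PosSemidef := by
    refine psd_of_herm_re hHherm fun x => ?_
    have h1 : (star x ⬝ᵥ H *ᵥ x).re = ((H * vecMulVec x (star x)).trace).re := by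
      rw [qf_eq_trace]
    rw [h1, key _ (outer_posSemidef x).isHermitian]
    exact hfnn _ (outer_posSemidef x)
  have hfsneg : ∀ σ ∈ F, f (c • σ - ρ) < 0 := by
    intro σ hσ
    have := hfs _ ⟨σ, hσ, rfl⟩
    linarith
  have hH0 : H ≠ 0 := by
    obtain ⟨σ1, hσ1⟩ := hne
    intro h
    have hherm : (c • σ1 - ρ).IsHermitian := herm_comb hρh (hFh σ1 hσ1) c
    have := key _ hherm
    rw [h, Matrix.zero_mul, Matrix.trace_zero] at this
    have h2 := hfsneg σ1 hσ1
    rw [← this] at h2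
    simp at h2
  refine ⟨H, hHpsd, hH0, fun σ hσ => ?_⟩
  have h1 := hfsneg σ hσ
  rw [map_sub, f.map_smul, smul_eq_mul] at h1
  rw [← key σ (hFh σ hσ), ← key ρ hρh] at h1
  linarith

end RgenAux

namespace RgenAux
open Matrix
variable {d : ℕ}

lemma cont_trace (Y : Matrix (Fin d) (Fin d) ℂ) :
    Continuous fun σ : Matrix (Fin d) (Fin d) ℂ => ((Y * σ).trace).re := by
  refine Complex.continuous_re.comp ?_
  simp only [Matrix.trace, Matrix.diag, Matrix.mul_apply]
  refine continuous_finset_sum _ fun i _ => continuous_finset_sum _ fun j _ => ?_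
  exact continuous_const.mul ((continuous_apply i).comp (continuous_apply j))

end RgenAux


/-- Game characterization of the generalized robustness of states: the supremum over
nonzero positive semidefinite witnesses `Y` of the payoff ratio equals
`1 + R_F(ρ)`. (Since `F` contains a positive definite state, the denominator
`sup_{σ ∈ F} Re tr(Y σ)` is positive for every nonzero `Y ≥ 0`.) -/
theorem rgen_game {d : ℕ} (F : Set (Matrix (Fin d) (Fin d) ℂ))
    (hne : F.Nonempty) (hcomp : IsCompact F) (hconv : Convex ℝ F)
    (hFd : ∀ σ ∈ F, IsDensity σ) (hpd : ∃ σ ∈ F, σ.PosDef)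
    (ρ : Matrix (Fin d) (Fin d) ℂ) (hρ : IsDensity ρ) :
    sSup {x : ℝ | ∃ Y : Matrix (Fin d) (Fin d) ℂ, Y.PosSemidef ∧ Y ≠ 0 ∧
        x = ((Y * ρ).trace).re / sSup ((fun σ => ((Y * σ).trace).re) '' F)} =
      1 + (Rgen F ρ).toReal := by
  classical
  open Matrix in
  obtain ⟨σ0, hσ0F, hσ0⟩ := hpd
  have hd : 0 < d := RgenAux.dim_pos hρ
  set S : Set ℝ≥0 := {t : ℝ≥0 | ∃ τ, IsDensity τ ∧
      ∃ σ ∈ F, ρ + (t : ℝ) • τ = ((1 : ℝ) + (t : ℝ)) • σ} with hS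
  have hRgen : Rgen F ρ = ⨅ t ∈ S, (t : ℝ≥0∞) := rfl
  set G : Set ℝ := {x : ℝ | ∃ Y : Matrix (Fin d) (Fin d) ℂ, Y.PosSemidef ∧ Y ≠ 0 ∧
      x = ((Y * ρ).trace).re / sSup ((fun σ => ((Y * σ).trace).re) '' F)} with hG
  -- feasibility: S is nonempty
  obtain ⟨c, hc, hlow⟩ := RgenAux.pd_lower hd hσ0
  set t0 : ℝ≥0 := Real.toNNReal c⁻¹ with ht0
  have ht0c : (t0 : ℝ) = c⁻¹ := Real.coe_toNNReal _ (by positivity)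
  have hpsd0 : (((1:ℝ)+(t0:ℝ)) • σ0 - ρ).PosSemidef := by
    refine RgenAux.psd_of_herm_re (RgenAux.herm_comb hρ.1.1 (hFd σ0 hσ0F).1.1 _) fun x => ?_
    have hsplit : star x ⬝ᵥ (((1:ℝ)+(t0:ℝ)) • σ0 - ρ) *ᵥ x
        = ((1:ℝ)+(t0:ℝ)) • (star x ⬝ᵥ σ0 *ᵥ x) - star x ⬝ᵥ ρ *ᵥ x := by
      rw [Matrix.sub_mulVec, dotProduct_sub, Matrix.smul_mulVec, dotProduct_smul]
    rw [hsplit, Complex.sub_re, Complex.smul_re, smul_eq_mul]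
    have h1 := hlow x
    have h2 := RgenAux.qf_le_trace hρ.1 x
    rw [hρ.2] at h2
    simp only [Complex.one_re, one_mul] at h2
    have h3 : 1 ≤ ((1:ℝ)+(t0:ℝ)) * c := by
      rw [ht0c]
      rw [add_mul, one_mul, inv_mul_cancel₀ hc.ne']
      linarith
    have hn : 0 ≤ (star x ⬝ᵥ x).re := by
      rw [RgenAux.self_dot_re]
      exact Finset.sum_nonneg fun i _ => Complex.normSq_nonneg _
    have hpos : (0:ℝ) < 1 + (t0:ℝ) := by positivity
    nlinarith [mul_le_mul_of_nonneg_left h1 hpos.le, mul_le_mul_of_nonneg_right h3 hn]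
  have ht0S : t0 ∈ S := RgenAux.mem_S hρ hσ0F (hFd σ0 hσ0F) t0 hpsd0
  have hfin : Rgen F ρ ≠ ⊤ := by
    have hle : Rgen F ρ ≤ (t0 : ℝ≥0∞) := hRgen ▸ iInf₂_le t0 ht0S
    exact ne_top_of_le_ne_top ENNReal.coe_ne_top hle
  set r : ℝ := (Rgen F ρ).toReal with hr
  have hr0 : 0 ≤ r := ENNReal.toReal_nonneg
  -- upper bound: each element of G is at most 1 + r
  have hub : ∀ x ∈ G, x ≤ 1 + r := by
    rintro x ⟨Y, hYpsd, hY0, rfl⟩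
    set den := sSup ((fun σ => ((Y * σ).trace).re) '' F) with hden
    have hbdd : BddAbove ((fun σ => ((Y * σ).trace).re) '' F) :=
      (hcomp.image (RgenAux.cont_trace Y)).bddAbove
    have hdenpos : 0 < den :=
      lt_of_lt_of_le (RgenAux.trace_mul_pd_re_pos hYpsd hY0 hσ0)
        (le_csSup hbdd ⟨σ0, hσ0F, rfl⟩)
    have hnum_le : ∀ t ∈ S, ((Y * ρ).trace).re ≤ ((1:ℝ)+(t:ℝ)) * den := by
      rintro t ⟨τ, hτ, σ, hσF, heq⟩
      have h1 : Y * ρ = ((1:ℝ)+(t:ℝ)) • (Y * σ) - (t:ℝ) • (Y * τ) := by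
        have h2 : Y * (ρ + (t:ℝ) • τ) = Y * (((1:ℝ)+(t:ℝ)) • σ) := by rw [heq]
        rw [Matrix.mul_add, Matrix.mul_smul, Matrix.mul_smul] at h2
        rw [eq_sub_iff_add_eq, h2]
      have h3 : ((Y * ρ).trace).re
          = ((1:ℝ)+(t:ℝ)) * ((Y * σ).trace).re - (t:ℝ) * ((Y * τ).trace).re := by
        rw [h1, Matrix.trace_sub, Matrix.trace_smul, Matrix.trace_smul, Complex.sub_re,
          Complex.smul_re, Complex.smul_re, smul_eq_mul, smul_eq_mul]
      have h4 : 0 ≤ ((Y * τ).trace).re := RgenAux.trace_mul_psd_re_nonneg hYpsd hτ.1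
      have h5 : ((Y * σ).trace).re ≤ den := le_csSup hbdd ⟨σ, hσF, rfl⟩
      have h6 : (0:ℝ) ≤ (t:ℝ) := t.2
      have h7 : (0:ℝ) < 1 + (t:ℝ) := by positivity
      rw [h3]
      nlinarith
    have hq' : ∀ t ∈ S, ((Y * ρ).trace).re / den ≤ 1 + (t:ℝ) := by
      intro t ht
      rw [div_le_iff₀ hdenpos]
      calc ((Y * ρ).trace).re ≤ ((1:ℝ)+(t:ℝ)) * den := hnum_le t ht
        _ = (1 + (t:ℝ)) * den := by norm_num
    set q := ((Y * ρ).trace).re / den with hq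
    rcases le_or_gt q 1 with h | h
    · linarith
    · have hq0 : 0 ≤ q - 1 := by linarith
      have hcoe : (Real.toNNReal (q - 1) : ℝ≥0∞) ≤ Rgen F ρ := by
        rw [hRgen]
        refine le_iInf₂ fun t ht => ?_
        rw [ENNReal.coe_le_coe, Real.toNNReal_le_iff_le_coe]
        linarith [hq' t ht]
      have hmono := ENNReal.toReal_mono hfin hcoe
      rw [ENNReal.coe_toReal, Real.coe_toNNReal _ hq0] at hmono
      linarith
  -- 1 is in G (witness Y = 1)
  have hone : (1:ℝ) ∈ G := by
    have h1ne : (1 : Matrix (Fin d) (Fin d) ℂ) ≠ 0 := by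
      intro h
      have := congrFun (congrFun h ⟨0, hd⟩) ⟨0, hd⟩
      simp [Matrix.one_apply] at this
    refine ⟨1, Matrix.PosSemidef.one, h1ne, ?_⟩
    have himg : ((fun σ => (((1 : Matrix (Fin d) (Fin d) ℂ) * σ).trace).re) '' F) = {1} := by
      apply Set.eq_singleton_iff_nonempty_unique_mem.mpr
      constructor
      · exact hne.image _
      · rintro z ⟨σ, hσF, rfl⟩
        show (((1 : Matrix (Fin d) (Fin d) ℂ) * σ).trace).re = 1
        rw [Matrix.one_mul, (hFd σ hσF).2, Complex.one_re]
    rw [Matrix.one_mul, hρ.2, himg, csSup_singleton]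
    norm_num
  have hGbdd : BddAbove G := ⟨1 + r, hub⟩
  -- lower bound
  have hlow2 : ∀ ε : ℝ, 0 < ε → 1 + r - ε ≤ sSup G := by
    intro ε hε
    rcases le_or_gt r ε with h | h
    · have h1 : (1:ℝ) ≤ sSup G := le_csSup hGbdd hone
      linarith
    · set t : ℝ≥0 := Real.toNNReal (r - ε) with ht
      have htc : (t:ℝ) = r - ε := Real.coe_toNNReal _ (by linarith)
      have htlt : (t : ℝ≥0∞) < Rgen F ρ := by
        rw [← ENNReal.coe_toNNReal hfin, ENNReal.coe_lt_coe, ← NNReal.coe_lt_coe, htc]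
        have hrr : ((Rgen F ρ).toNNReal : ℝ) = r := rfl
        rw [hrr]
        linarith
      have hinf : ∀ σ ∈ F, ¬ (((1:ℝ)+(t:ℝ)) • σ - ρ).PosSemidef := by
        intro σ hσF hpsd
        have hmem : t ∈ S := RgenAux.mem_S hρ hσF (hFd σ hσF) t hpsd
        have hle : Rgen F ρ ≤ (t:ℝ≥0∞) := hRgen ▸ iInf₂_le t hmem
        exact absurd (lt_of_le_of_lt hle htlt) (lt_irrefl _)
      obtain ⟨H, hHpsd, hH0, hHlt⟩ := RgenAux.exists_witness hne hcomp hconv hρ.1.1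
        (fun σ hσ => (hFd σ hσ).1.1) ((1:ℝ)+(t:ℝ)) hinf
      set den := sSup ((fun σ => ((H * σ).trace).re) '' F) with hden
      have hbdd : BddAbove ((fun σ => ((H * σ).trace).re) '' F) :=
        (hcomp.image (RgenAux.cont_trace H)).bddAbove
      have hdenpos : 0 < den :=
        lt_of_lt_of_le (RgenAux.trace_mul_pd_re_pos hHpsd hH0 hσ0)
          (le_csSup hbdd ⟨σ0, hσ0F, rfl⟩)
      obtain ⟨σm, hσmF, hmax⟩ := hcomp.exists_isMaxOn hne (RgenAux.cont_trace H).continuousOn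
      have hdeneq : den = ((H * σm).trace).re := by
        refine le_antisymm (csSup_le (hne.image _) ?_) (le_csSup hbdd ⟨σm, hσmF, rfl⟩)
        rintro z ⟨σ, hσF, rfl⟩
        exact hmax hσF
      have hnum : ((1:ℝ)+(t:ℝ)) * den < ((H * ρ).trace).re := by
        rw [hdeneq]
        exact hHlt σm hσmF
      have hx : ((H * ρ).trace).re / den ∈ G := ⟨H, hHpsd, hH0, rfl⟩
      have hxval : 1 + (t:ℝ) < ((H * ρ).trace).re / den := by
        rw [lt_div_iff₀ hdenpos]
        calc (1 + (t:ℝ)) * den = ((1:ℝ)+(t:ℝ)) * den := by norm_num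
          _ < ((H * ρ).trace).re := hnum
      have hsup := le_csSup hGbdd hx
      rw [htc] at hxval
      linarith
  refine le_antisymm (csSup_le ⟨1, hone⟩ hub) ?_
  by_contra hcon
  push_neg at hcon
  have := hlow2 ((1 + r - sSup G)/2) (by linarith)
  linarith
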